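/- For τ ∈ ℝ define the explicit map Φ_τ on finitely supported v : ℤ^d → ℂ by (Φ_τ v)_k = e^{−iτ|k|²} v_k − i τ e^{−iτ|k|²} Σ_{−k₁+k₂+k₃=k} (φ₁(2iτ|k₁|²) − φ₂(2iτ|k₁|²)) conj(v_{k₁}) v_{k₂} v_{k₃} − i τ Σ_{−k₁+k₂+k₃=k} e^{−iτ(|k₁|²+|k₂|²+|k₃|²)} φ₂(2iτ|k₁|²) conj(v_{k₁}) v_{k₂} v_{k₃} − (τ²/2) e^{−iτ|k|²} Σ_{−k₁−k₂+k₃+k₄+k₅=k} conj(v_{k₁}) conj(v_{k₂}) v_{k₃} v_{k₄} v_{k₅}. Then Φ is not a symmetric method: there exist τ ∈ ℝ and a finitely supported v : ℤ^d → ℂ such that Φ_τ(Φ_{−τ}(v)) ≠ v. -/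
import Mathlib


/-- `φ₁(z) = (exp z - 1)/z` for `z ≠ 0`, `φ₁(0) = 1`. -/
noncomputable def phi1 (z : ℂ) : ℂ := if z = 0 then 1 else (Complex.exp z - 1) / z

/-- `φ₂(z) = (exp z - 1 - z)/z²` for `z ≠ 0`, `φ₂(0) = 1/2`. -/
noncomputable def phi2 (z : ℂ) : ℂ :=
  if z = 0 then 1 / 2 else (Complex.exp z - 1 - z) / z ^ 2

/-- `|k|² = k·k` for a frequency `k ∈ ℤ^d`, as a complex number. -/
noncomputable def nsq {d : ℕ} (k : Fin d → ℤ) : ℂ := ∑ i, ((k i : ℂ)) ^ 2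

/-- The explicit second-order resonance-based integrator of Bruned & Schratz (2022)
for the cubic NLS equation on `𝕋^d`, in Fourier coordinates:
`(Φ_τ v)_k = e^{-iτ|k|²} v_k
  - iτ e^{-iτ|k|²} Σ_{-k₁+k₂+k₃=k} (φ₁(2iτ|k₁|²) - φ₂(2iτ|k₁|²)) conj(v_{k₁}) v_{k₂} v_{k₃}
  - iτ Σ_{-k₁+k₂+k₃=k} e^{-iτ(|k₁|²+|k₂|²+|k₃|²)} φ₂(2iτ|k₁|²) conj(v_{k₁}) v_{k₂} v_{k₃}
  - (τ²/2) e^{-iτ|k|²} Σ_{-k₁-k₂+k₃+k₄+k₅=k} conj(v_{k₁}) conj(v_{k₂}) v_{k₃} v_{k₄} v_{k₅}`,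
where the convolution constraints have been solved as `k₃ = k + k₁ - k₂` and
`k₅ = k + k₁ + k₂ - k₃ - k₄` respectively. -/
noncomputable def brunedSchratz22 {d : ℕ} (τ : ℝ) (v : (Fin d → ℤ) → ℂ) :
    (Fin d → ℤ) → ℂ := fun k =>
  Complex.exp (-(Complex.I * (τ : ℂ) * nsq k)) * v k
    - Complex.I * (τ : ℂ) * Complex.exp (-(Complex.I * (τ : ℂ) * nsq k)) *
        (∑ᶠ k₁ : Fin d → ℤ, ∑ᶠ k₂ : Fin d → ℤ,
          (phi1 (2 * Complex.I * (τ : ℂ) * nsq k₁) -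
              phi2 (2 * Complex.I * (τ : ℂ) * nsq k₁)) *
            ((starRingEnd ℂ) (v k₁) * v k₂ * v (k + k₁ - k₂)))
    - Complex.I * (τ : ℂ) *
        (∑ᶠ k₁ : Fin d → ℤ, ∑ᶠ k₂ : Fin d → ℤ,
          Complex.exp (-(Complex.I * (τ : ℂ) * (nsq k₁ + nsq k₂ + nsq (k + k₁ - k₂)))) *
            phi2 (2 * Complex.I * (τ : ℂ) * nsq k₁) *
            ((starRingEnd ℂ) (v k₁) * v k₂ * v (k + k₁ - k₂)))
    - ((τ : ℂ) ^ 2 / 2) * Complex.exp (-(Complex.I * (τ : ℂ) * nsq k)) *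
        (∑ᶠ k₁ : Fin d → ℤ, ∑ᶠ k₂ : Fin d → ℤ, ∑ᶠ k₃ : Fin d → ℤ, ∑ᶠ k₄ : Fin d → ℤ,
          (starRingEnd ℂ) (v k₁) * (starRingEnd ℂ) (v k₂) * v k₃ * v k₄ *
            v (k + k₁ + k₂ - k₃ - k₄))


lemma nsq_zero {d : ℕ} : nsq (0 : Fin d → ℤ) = 0 := by simp [nsq]

lemma phi1_zero : phi1 0 = 1 := by simp [phi1]
lemma phi2_zero : phi2 0 = 1/2 := by simp [phi2]

lemma brunedSchratz22_key {d : ℕ} (τ : ℝ) (w : (Fin d → ℤ) → ℂ)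
    (h : ∀ k, k ≠ 0 → w k = 0) (k : Fin d → ℤ) :
    brunedSchratz22 τ w k = Complex.exp (-(Complex.I * (τ : ℂ) * nsq k)) *
      ((1 : ℂ) - Complex.I * (τ : ℂ) * ((starRingEnd ℂ) (w 0) * w 0)
        - ((τ : ℂ)^2/2) * ((starRingEnd ℂ) (w 0) * w 0)^2) * w k := by
  unfold brunedSchratz22
  rw [finsum_eq_single _ (0 : Fin d → ℤ) (by intro x hx; simp [h x hx]),
      finsum_eq_single _ (0 : Fin d → ℤ) (by intro x hx; simp [h x hx]),
      finsum_eq_single _ (0 : Fin d → ℤ) (by intro x hx; simp [h x hx]),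
      finsum_eq_single _ (0 : Fin d → ℤ) (by intro x hx; simp [h x hx]),
      finsum_eq_single _ (0 : Fin d → ℤ) (by intro x hx; simp [h x hx]),
      finsum_eq_single _ (0 : Fin d → ℤ) (by intro x hx; simp [h x hx]),
      finsum_eq_single _ (0 : Fin d → ℤ) (by intro x hx; simp [h x hx]),
      finsum_eq_single _ (0 : Fin d → ℤ) (by intro x hx; simp [h x hx])]
  simp only [nsq_zero, mul_zero, phi1_zero, phi2_zero, add_zero, sub_zero, zero_add,
    add_zero]
  ring

/-- The explicit second-order resonance-based integrator 'Bruned & Schratz 2022' is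
not a symmetric method: there exist a step size `τ` and finitely supported Fourier
data `v` such that `Φ_τ(Φ_{-τ}(v)) ≠ v`. -/
theorem brunedSchratz22_not_symmetric (d : ℕ) :
    ∃ (τ : ℝ) (v : (Fin d → ℤ) →₀ ℂ),
      brunedSchratz22 τ (brunedSchratz22 (-τ) (v : (Fin d → ℤ) → ℂ)) ≠
        (v : (Fin d → ℤ) → ℂ) := by
  refine ⟨1, Finsupp.single 0 1, fun h => ?_⟩
  have hv : ∀ k : Fin d → ℤ, k ≠ 0 →
      ((Finsupp.single (0 : Fin d → ℤ) (1 : ℂ)) : (Fin d → ℤ) → ℂ) k = 0 := by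
    intro k hk
    simp [Finsupp.single_apply, (Ne.symm hk)]
  set v : (Fin d → ℤ) → ℂ := ((Finsupp.single (0 : Fin d → ℤ) (1 : ℂ)) : (Fin d → ℤ) → ℂ)
  have hw : ∀ k : Fin d → ℤ, k ≠ 0 → brunedSchratz22 (-1) v k = 0 := by
    intro k hk
    rw [brunedSchratz22_key _ _ hv, hv k hk, mul_zero]
  have h0 := congrFun h 0
  rw [brunedSchratz22_key _ _ hw 0, brunedSchratz22_key _ _ hv 0] at h0
  have hv0 : v 0 = 1 := by simp [v]
  rw [hv0] at h0
  simp only [nsq_zero, mul_zero, neg_zero, Complex.exp_zero, one_mul, mul_one, map_one] at h0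
  norm_num [Complex.ext_iff, Complex.div_re, Complex.div_im, Complex.normSq, map_ofNat,
    pow_two] at h0
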